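/- The function v_n = ∏_{i=1}^M √(n_i! / n_i^{n_i}) (with the convention 0^0 = 1) is Schur-concave on vectors of nonnegative integers: if n ≺ m with equal sums, then v_n ≥ v_m. -/

import Mathlib

open Finset

/-- Majorization of integer vectors via partial-sum domination with equal total sums. -/
def Maj {M : ℕ} (x y : Fin M → ℕ) : Prop :=
  (∀ k : ℕ, k < M → ∑ i ∈ univ.filter (fun i : Fin M => (i : ℕ) < k), x i ≤
      ∑ i ∈ univ.filter (fun i : Fin M => (i : ℕ) < k), y i) ∧
    ∑ i, x i = ∑ i, y i

/-- `v_n = ∏ i √(n_i! / n_i^{n_i})` (for `n i = 0` the factor is `√(1/1) = 1`,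
using the convention `0^0 = 1`). -/
noncomputable def v {M : ℕ} (n : Fin M → ℕ) : ℝ :=
  ∏ i, Real.sqrt ((Nat.factorial (n i) : ℝ) / (n i : ℝ) ^ (n i))

/-! ### Auxiliary material -/

noncomputable def G (k : ℕ) : ℝ := Real.log (Nat.factorial k) - k * Real.log k

noncomputable def D (k : ℕ) : ℝ := G (k+1) - G k

lemma D_eq (k : ℕ) : D k = k * Real.log k - k * Real.log (k+1) := by
  unfold D G
  rw [Nat.factorial_succ]
  push_cast
  rw [Real.log_mul (by positivity) (by exact_mod_cast Nat.cast_ne_zero.mpr k.factorial_ne_zero)]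
  ring

/-- key inequality : `(k+1)^(2k+1) ≤ k^k * (k+2)^(k+1)` for `k ≥ 1`. -/
lemma key (k : ℕ) (hk : 1 ≤ k) :
    ((k:ℝ)+1)^(2*k+1) ≤ (k:ℝ)^k * ((k:ℝ)+2)^(k+1) := by
  set K : ℝ := (k:ℝ) with hK
  have hK1 : (1:ℝ) ≤ K := by rw [hK]; exact_mod_cast hk
  have h0 : (0:ℝ) < K * (K+2) := by nlinarith
  set y : ℝ := (K*(K+2))⁻¹ with hy
  have hy0 : 0 < y := by positivity
  have hy1 : y ≤ 1/3 := by
    rw [hy, inv_le_comm₀ (by linarith) (by norm_num)]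
    nlinarith
  have hky : K * y = (K+2)⁻¹ := by
    rw [hy]; field_simp
  have hBern : 1 + (k:ℝ) * (-y) ≤ (1 + (-y))^k := by
    apply one_add_mul_le_pow (by linarith)
  have h1 : (K+1)/(K+2) ≤ (1 - y)^k := by
    have : 1 - K * y = (K+1)/(K+2) := by
      rw [hky]; field_simp; ring
    calc (K+1)/(K+2) = 1 - K*y := this.symm
    _ = 1 + (k:ℝ)*(-y) := by rw [hK]; ring
    _ ≤ (1 + (-y))^k := hBern
    _ = (1-y)^k := by ring_nf
  have h2 : (1+y)^k * (1-y)^k ≤ 1 := by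
    rw [← mul_pow]
    have : (1+y)*(1-y) = 1 - y^2 := by ring
    rw [this]
    apply pow_le_one₀ (by nlinarith) (by nlinarith)
  have h3 : (1+y)^k ≤ (K+2)/(K+1) := by
    have hfr : 0 < (K+1)/(K+2) := by positivity
    have := mul_le_mul_of_nonneg_left h1 (le_of_lt (by positivity : (0:ℝ) < (1+y)^k))
    have h4 : (1+y)^k * ((K+1)/(K+2)) ≤ 1 := le_trans this h2
    have h5 : (1+y)^k * (K+1) ≤ K+2 := by
      have h6 := mul_le_mul_of_nonneg_right h4 (by linarith : (0:ℝ) ≤ K+2)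
      calc (1+y)^k*(K+1) = (1+y)^k * ((K+1)/(K+2)) * (K+2) := by field_simp
      _ ≤ 1 * (K+2) := h6
      _ = K+2 := one_mul _
    rw [le_div_iff₀ (by linarith)]
    exact h5
  have hsq : (K+1)^2 = (K*(K+2)) * (1+y) := by
    have : K*(K+2)*y = 1 := by
      rw [hy]; field_simp
    nlinarith
  calc (K+1)^(2*k+1) = ((K+1)^2)^k * (K+1) := by rw [← pow_mul]; ring
  _ = (K*(K+2))^k * (1+y)^k * (K+1) := by rw [hsq, mul_pow]
  _ ≤ (K*(K+2))^k * ((K+2)/(K+1)) * (K+1) := by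
      apply mul_le_mul_of_nonneg_right _ (by linarith)
      apply mul_le_mul_of_nonneg_left h3 (by positivity)
  _ = K^k * (K+2)^k * (K+2) := by
      rw [mul_pow]; field_simp
  _ = K^k * (K+2)^(k+1) := by ring

lemma D_antitone : Antitone D := by
  apply antitone_nat_of_succ_le
  intro k
  rw [D_eq, D_eq]
  rcases Nat.eq_zero_or_pos k with rfl | hk
  · simp
    have := Real.log_nonneg (by norm_num : (1:ℝ) ≤ 2)
    norm_num
    linarith
  · have h := key k hk
    have hlog := Real.log_le_log (by positivity) h
    rw [Real.log_pow, Real.log_mul (by positivity) (by positivity), Real.log_pow,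
      Real.log_pow] at hlog
    push_cast at hlog ⊢
    have h2 : ((k:ℝ)+1)+1 = (k:ℝ)+2 := by ring
    rw [h2]
    nlinarith

lemma G_tele {a b : ℕ} (hab : a ≤ b) : G b - G a = ∑ j ∈ Ico a b, D j := by
  rw [Finset.sum_Ico_eq_sub _ hab]
  have h1 : ∀ t : ℕ, ∑ j ∈ range t, D j = G t - G 0 := fun t => Finset.sum_range_sub G t
  rw [h1, h1]; ring

lemma G_support (a b : ℕ) : G b ≤ G a + D a * ((b:ℝ) - a) := by
  rcases le_or_gt a b with hab | hab
  · have h1 : G b - G a ≤ (b - a) • D a := by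
      rw [G_tele hab]
      have := Finset.sum_le_card_nsmul (Ico a b) D (D a)
        (fun j hj => D_antitone (mem_Ico.mp hj).1)
      rwa [Nat.card_Ico] at this
    rw [nsmul_eq_mul, Nat.cast_sub hab] at h1
    linarith [h1]
  · have hba : b ≤ a := le_of_lt hab
    have h1 : (a - b) • D a ≤ G a - G b := by
      rw [G_tele hba]
      have := Finset.card_nsmul_le_sum (Ico b a) D (D a)
        (fun j hj => D_antitone (le_of_lt (mem_Ico.mp hj).2))
      rwa [Nat.card_Ico] at this
    rw [nsmul_eq_mul, Nat.cast_sub hba] at h1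
    nlinarith [h1]

lemma abel_le (M : ℕ) (lam c : ℕ → ℝ)
    (hlam : ∀ i, i + 1 < M → lam i ≤ lam (i+1))
    (hT : ∀ k, k < M → 0 ≤ ∑ j ∈ range k, c j)
    (hTM : ∑ j ∈ range M, c j = 0) :
    ∑ j ∈ range M, lam j * c j ≤ 0 := by
  have := Finset.sum_range_by_parts lam c M
  simp only [smul_eq_mul] at this
  rw [this, hTM, mul_zero, zero_sub, neg_nonpos]
  apply Finset.sum_nonneg
  intro i hi
  have hi' : i + 1 < M := by
    have := mem_range.mp hi; omega
  exact mul_nonneg (by linarith [hlam i hi']) (hT (i+1) hi')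

def extFn {M : ℕ} (f : Fin M → ℕ) : ℕ → ℕ := fun j => if h : j < M then f ⟨j, h⟩ else 0

lemma sum_ext {M : ℕ} {α : Type*} [AddCommMonoid α] (f : Fin M → ℕ) (F : ℕ → α) :
    ∑ i : Fin M, F (f i) = ∑ j ∈ range M, F (extFn f j) := by
  rw [← Fin.sum_univ_eq_sum_range (fun j => F (extFn f j)) M]
  apply Finset.sum_congr rfl
  intro i _
  simp [extFn, i.2]

lemma sum_filter_ext {M : ℕ} (f : Fin M → ℕ) (k : ℕ) (hk : k ≤ M) :
    ∑ i ∈ univ.filter (fun i : Fin M => (i : ℕ) < k), f i = ∑ j ∈ range k, extFn f j := by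
  rw [Finset.sum_filter]
  calc ∑ a : Fin M, (if (a:ℕ) < k then f a else 0)
      = ∑ a : Fin M, (fun j => if j < k then extFn f j else 0) (a:ℕ) := by
        apply Finset.sum_congr rfl
        intro i _
        simp [extFn, i.2]
    _ = ∑ j ∈ range M, (if j < k then extFn f j else 0) :=
        by exact Fin.sum_univ_eq_sum_range (fun j => if j < k then extFn f j else 0) M
    _ = ∑ j ∈ (range M).filter (fun j => j < k), extFn f j := (Finset.sum_filter _ _).symm
    _ = ∑ j ∈ range k, extFn f j := by
        congr 1
        ext j
        simp only [mem_filter, mem_range]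
        omega

lemma Fpos (k : ℕ) : 0 < (Nat.factorial k : ℝ) / (k : ℝ) ^ k := by
  apply div_pos (by exact_mod_cast k.factorial_pos)
  rcases Nat.eq_zero_or_pos k with rfl | h
  · norm_num
  · exact pow_pos (by exact_mod_cast h) k

lemma logF (k : ℕ) : Real.log ((Nat.factorial k : ℝ) / (k : ℝ) ^ k) = G k := by
  have h1 : (Nat.factorial k : ℝ) ≠ 0 := by exact_mod_cast k.factorial_ne_zero
  have h2 : ((k : ℝ)) ^ k ≠ 0 := by
    rcases Nat.eq_zero_or_pos k with rfl | h
    · norm_num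
    · exact ne_of_gt (pow_pos (by exact_mod_cast h) k)
  rw [Real.log_div h1 h2, Real.log_pow, G]

lemma v_pos {M : ℕ} (n : Fin M → ℕ) : 0 < v n := by
  apply Finset.prod_pos
  intro i _
  exact Real.sqrt_pos.mpr (Fpos (n i))

lemma log_v {M : ℕ} (n : Fin M → ℕ) :
    Real.log (v n) = ∑ i, G (n i) / 2 := by
  unfold v
  rw [Real.log_prod (fun i _ => ne_of_gt (Real.sqrt_pos.mpr (Fpos (n i))))]
  apply Finset.sum_congr rfl
  intro i _
  rw [Real.log_sqrt (Fpos (n i)).le, logF]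

theorem v_schur_concave {M : ℕ} (n m : Fin M → ℕ)
    (hn : Antitone n) (hm : Antitone m)
    (hsum : ∑ i, n i = ∑ i, m i)
    (hmaj : Maj n m) :
    v n ≥ v m := by
  obtain ⟨hpart, _⟩ := hmaj
  set N := extFn n with hN
  set Mm := extFn m with hMm
  -- nat partial sums
  have hps : ∀ k, k ≤ M → ∑ j ∈ range k, N j ≤ ∑ j ∈ range k, Mm j := by
    intro k hk
    rcases lt_or_eq_of_le hk with hk' | rfl
    · have := hpart k hk'
      rwa [sum_filter_ext n k hk, sum_filter_ext m k hk] at this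
    · have h1 := sum_ext n (fun x => x)
      have h2 := sum_ext m (fun x => x)
      rw [hN, hMm, ← h1, ← h2, hsum]
  -- real differences
  set c : ℕ → ℝ := fun j => (Mm j : ℝ) - (N j : ℝ) with hc
  have hT : ∀ k, k ≤ M → 0 ≤ ∑ j ∈ range k, c j := by
    intro k hk
    have := hps k hk
    rw [hc]
    rw [Finset.sum_sub_distrib]
    rw [sub_nonneg]
    rw [← Nat.cast_sum, ← Nat.cast_sum]
    exact_mod_cast this
  have hTM : ∑ j ∈ range M, c j = 0 := by
    have h1 := sum_ext n (fun x => x)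
    have h2 := sum_ext m (fun x => x)
    rw [hc, Finset.sum_sub_distrib, sub_eq_zero, ← Nat.cast_sum, ← Nat.cast_sum]
    rw [← h1, ← h2]
    exact_mod_cast hsum.symm
  -- slopes
  set lam : ℕ → ℝ := fun j => D (N j) with hlam'
  have hlam : ∀ i, i + 1 < M → lam i ≤ lam (i+1) := by
    intro i hi
    have hiM : i < M := by omega
    have hmono : N (i+1) ≤ N i := by
      rw [hN]
      simp only [extFn, dif_pos hi, dif_pos hiM]
      exact hn (by simp [Fin.mk_le_mk])
    exact D_antitone hmono
  -- core inequality on G sums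
  have hG : ∑ i, G (m i) ≤ ∑ i, G (n i) := by
    rw [sum_ext m G, sum_ext n G]
    have hstep : ∑ j ∈ range M, G (Mm j) - ∑ j ∈ range M, G (N j) ≤ 0 := by
      calc ∑ j ∈ range M, G (Mm j) - ∑ j ∈ range M, G (N j)
          = ∑ j ∈ range M, (G (Mm j) - G (N j)) := (Finset.sum_sub_distrib _ _).symm
        _ ≤ ∑ j ∈ range M, lam j * c j := by
            apply Finset.sum_le_sum
            intro j _
            have := G_support (N j) (Mm j)
            rw [hlam', hc]
            simp only
            linarith
        _ ≤ 0 := abel_le M lam c hlam (fun k hk => hT k (le_of_lt hk)) hTM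
    linarith
  -- conclude via logs
  have h1 : Real.log (v m) ≤ Real.log (v n) := by
    rw [log_v, log_v]
    have : ∑ i, G (m i) / 2 = (∑ i, G (m i)) / 2 := by
      rw [Finset.sum_div]
    have h2 : ∑ i, G (n i) / 2 = (∑ i, G (n i)) / 2 := by
      rw [Finset.sum_div]
    rw [this, h2]
    linarith
  have h2 := Real.exp_le_exp.mpr h1
  rwa [Real.exp_log (v_pos m), Real.exp_log (v_pos n)] at h2
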